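/- Theorem 3 (convergence of ROMMEO Q-iteration): let α > 0, γ ∈ [0,1), R : S × A × B → ℝ, a transition kernel p, and a prior P, and let 𝒯 be the soft Bellman operator (𝒯Q)(s,a,b) = R(s,a,b) + γ·∑_{s'} p(s,a,b,s')·log(∑_{b'} P(s',b')·(∑_{a'} exp(Q(s',a',b')/α))^α). Then 𝒯 has a unique fixed point Q* : S × A × B → ℝ, and for every initial Q₀ : S × A × B → ℝ the iterates Q_{k+1} = 𝒯Q_k converge to Q* (uniformly, i.e., max_{(s,a,b)} |Q_k(s,a,b) − Q*(s,a,b)| → 0 as k → ∞); correspondingly V_α(Q_k)(s) = log(∑_b P(s,b)·(∑_a exp(Q_k(s,a,b)/α))^α) converges to V_α(Q*)(s) for every s. -/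

import Mathlib

/-- The soft Bellman operator
(𝒯Q)(s,a,b) = R(s,a,b) + γ·∑_{s'} p(s,a,b,s')·log ∑_{b'} P(s',b')·(∑_{a'} exp(Q(s',a',b')/α))^α. -/
noncomputable def softBellman {S A B : Type*} [Fintype S] [Fintype A] [Fintype B]
    (α γ : ℝ) (R : S × A × B → ℝ) (p : S → A → B → S → ℝ) (P : S → B → ℝ)
    (Q : S × A × B → ℝ) : S × A × B → ℝ :=
  fun x => R x + γ * ∑ s', p x.1 x.2.1 x.2.2 s' *
    Real.log (∑ b', P s' b' * (∑ a', Real.exp (Q (s', a', b') / α)) ^ α)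

/-- The soft value map V_α(Q)(s) = log ∑_b P(s,b)·(∑_a exp(Q(s,a,b)/α))^α. -/
noncomputable def softValue {S A B : Type*} [Fintype A] [Fintype B]
    (α : ℝ) (P : S → B → ℝ) (Q : S × A × B → ℝ) (s : S) : ℝ :=
  Real.log (∑ b, P s b * (∑ a, Real.exp (Q (s, a, b) / α)) ^ α)

section Aux

open Real Finset

variable {S A B : Type*} [Fintype S] [Fintype A] [Fintype B]
    [Nonempty S] [Nonempty A] [Nonempty B]

lemma softValue_sum_pos {α : ℝ} (P : S → B → ℝ) (hP_pos : ∀ s b, 0 < P s b)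
    (Q : S × A × B → ℝ) (s : S) :
    0 < ∑ b, P s b * (∑ a, Real.exp (Q (s, a, b) / α)) ^ α := by
  apply Finset.sum_pos (fun b _ => ?_) univ_nonempty
  exact mul_pos (hP_pos s b) (Real.rpow_pos_of_pos
    (Finset.sum_pos (fun a _ => Real.exp_pos _) univ_nonempty) _)

lemma softValue_le {α : ℝ} (hα : 0 < α) (P : S → B → ℝ) (hP_pos : ∀ s b, 0 < P s b)
    (Q Q' : S × A × B → ℝ) (d : ℝ) (h : ∀ x, Q x ≤ Q' x + d) (s : S) :
    softValue α P Q s ≤ softValue α P Q' s + d := by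
  unfold softValue
  have key : ∑ b, P s b * (∑ a, Real.exp (Q (s, a, b) / α)) ^ α ≤
      Real.exp d * ∑ b, P s b * (∑ a, Real.exp (Q' (s, a, b) / α)) ^ α := by
    rw [Finset.mul_sum]
    apply Finset.sum_le_sum
    intro b _
    have h1 : ∑ a, Real.exp (Q (s, a, b) / α) ≤
        Real.exp (d / α) * ∑ a, Real.exp (Q' (s, a, b) / α) := by
      rw [Finset.mul_sum]
      apply Finset.sum_le_sum
      intro a _
      rw [← Real.exp_add, ← add_div]
      exact Real.exp_le_exp.2 (by have := h (s, a, b); gcongr <;> linarith)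
    have h2 : (∑ a, Real.exp (Q (s, a, b) / α)) ^ α ≤
        (Real.exp (d / α) * ∑ a, Real.exp (Q' (s, a, b) / α)) ^ α :=
      Real.rpow_le_rpow (Finset.sum_nonneg fun a _ => (Real.exp_pos _).le) h1 hα.le
    have h3 : (Real.exp (d / α) * ∑ a, Real.exp (Q' (s, a, b) / α)) ^ α =
        Real.exp d * (∑ a, Real.exp (Q' (s, a, b) / α)) ^ α := by
      rw [Real.mul_rpow (Real.exp_pos _).le
        (Finset.sum_nonneg fun a _ => (Real.exp_pos _).le), ← Real.exp_mul,
        div_mul_cancel₀ _ hα.ne']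
    calc P s b * (∑ a, Real.exp (Q (s, a, b) / α)) ^ α
        ≤ P s b * (Real.exp d * (∑ a, Real.exp (Q' (s, a, b) / α)) ^ α) := by
          rw [← h3]; exact mul_le_mul_of_nonneg_left h2 (hP_pos s b).le
      _ = Real.exp d * (P s b * (∑ a, Real.exp (Q' (s, a, b) / α)) ^ α) := by ring
  have hpos := softValue_sum_pos (α := α) P hP_pos Q' s
  calc Real.log (∑ b, P s b * (∑ a, Real.exp (Q (s, a, b) / α)) ^ α)
      ≤ Real.log (Real.exp d * ∑ b, P s b * (∑ a, Real.exp (Q' (s, a, b) / α)) ^ α) :=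
        Real.log_le_log (softValue_sum_pos (α := α) P hP_pos Q s) key
    _ = softValue α P Q' s + d := by
        rw [Real.log_mul (Real.exp_pos _).ne' hpos.ne', Real.log_exp, softValue]; ring

lemma abs_softValue_sub_le {α : ℝ} (hα : 0 < α) (P : S → B → ℝ) (hP_pos : ∀ s b, 0 < P s b)
    (Q Q' : S × A × B → ℝ) (d : ℝ) (h : ∀ x, |Q x - Q' x| ≤ d) (s : S) :
    |softValue α P Q s - softValue α P Q' s| ≤ d := by
  rw [abs_sub_le_iff]
  constructor
  · have := softValue_le hα P hP_pos Q Q' d (fun x => by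
      have := (abs_sub_le_iff.1 (h x)).1; linarith) s
    linarith
  · have := softValue_le hα P hP_pos Q' Q d (fun x => by
      have := (abs_sub_le_iff.1 (h x)).2; linarith) s
    linarith

end Aux

/-- Theorem 3 (convergence of ROMMEO Q-iteration): the soft Bellman
operator has a unique fixed point Q*, the iterates Q_{k+1} = 𝒯Q_k converge to Q*
uniformly from any initialization Q₀, and correspondingly V_α(Q_k)(s) → V_α(Q*)(s)
for every s. -/
theorem rommeo_q_iteration_convergence
    {S A B : Type*} [Fintype S] [Fintype A] [Fintype B]
    [Nonempty S] [Nonempty A] [Nonempty B]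
    (α γ : ℝ) (hα : 0 < α) (hγ₀ : 0 ≤ γ) (hγ₁ : γ < 1)
    (R : S × A × B → ℝ)
    (p : S → A → B → S → ℝ)
    (hp_nonneg : ∀ s a b s', 0 ≤ p s a b s') (hp_sum : ∀ s a b, ∑ s', p s a b s' = 1)
    (P : S → B → ℝ) (hP_pos : ∀ s b, 0 < P s b) (hP_sum : ∀ s, ∑ b, P s b = 1) :
    ∃ Qstar : S × A × B → ℝ,
      softBellman α γ R p P Qstar = Qstar
      ∧ (∀ Q : S × A × B → ℝ, softBellman α γ R p P Q = Q → Q = Qstar)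
      ∧ (∀ Q₀ : S × A × B → ℝ,
          Filter.Tendsto
            (fun k => Finset.univ.sup' Finset.univ_nonempty
              (fun x : S × A × B => |(softBellman α γ R p P)^[k] Q₀ x - Qstar x|))
            Filter.atTop (nhds 0))
      ∧ (∀ (Q₀ : S × A × B → ℝ) (s : S),
          Filter.Tendsto
            (fun k => softValue α P ((softBellman α γ R p P)^[k] Q₀) s)
            Filter.atTop (nhds (softValue α P Qstar s))) := by
  set f := softBellman α γ R p P with hf
  have hVdist : ∀ (Q Q' : S × A × B → ℝ) (s' : S),
      |softValue α P Q s' - softValue α P Q' s'| ≤ dist Q Q' := by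
    intro Q Q' s'
    refine abs_softValue_sub_le hα P hP_pos Q Q' _ (fun y => ?_) s'
    have := dist_le_pi_dist Q Q' y
    rwa [Real.dist_eq] at this
  have hcontr : ∀ Q Q' : S × A × B → ℝ, dist (f Q) (f Q') ≤ γ * dist Q Q' := by
    intro Q Q'
    rw [dist_pi_le_iff (mul_nonneg hγ₀ dist_nonneg)]
    intro x
    rw [Real.dist_eq]
    have heq : f Q x - f Q' x = γ * ∑ s', p x.1 x.2.1 x.2.2 s' *
        (softValue α P Q s' - softValue α P Q' s') := by
      simp only [hf, softBellman, softValue, mul_sub, Finset.sum_sub_distrib, mul_sub]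
      ring
    rw [heq, abs_mul, abs_of_nonneg hγ₀]
    refine mul_le_mul_of_nonneg_left ?_ hγ₀
    calc |∑ s', p x.1 x.2.1 x.2.2 s' * (softValue α P Q s' - softValue α P Q' s')|
        ≤ ∑ s', |p x.1 x.2.1 x.2.2 s' * (softValue α P Q s' - softValue α P Q' s')| :=
          Finset.abs_sum_le_sum_abs _ _
      _ ≤ ∑ s', p x.1 x.2.1 x.2.2 s' * dist Q Q' := by
          refine Finset.sum_le_sum fun s' _ => ?_
          rw [abs_mul, abs_of_nonneg (hp_nonneg _ _ _ _)]
          exact mul_le_mul_of_nonneg_left (hVdist Q Q' s') (hp_nonneg _ _ _ _)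
      _ = dist Q Q' := by rw [← Finset.sum_mul, hp_sum, one_mul]
  set K : NNReal := ⟨γ, hγ₀⟩ with hK
  have hlip : LipschitzWith K f := LipschitzWith.of_dist_le_mul (by
    intro Q Q'; exact hcontr Q Q')
  have hC : ContractingWith K f := ⟨by exact_mod_cast hγ₁, hlip⟩
  refine ⟨ContractingWith.fixedPoint f hC, hC.fixedPoint_isFixedPt, ?_, ?_, ?_⟩
  · exact fun Q hQ => hC.fixedPoint_unique hQ
  · intro Q₀
    have hdist : Filter.Tendsto (fun k => dist (f^[k] Q₀) (ContractingWith.fixedPoint f hC))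
        Filter.atTop (nhds 0) :=
      tendsto_iff_dist_tendsto_zero.mp (hC.tendsto_iterate_fixedPoint Q₀)
    refine squeeze_zero (fun k => ?_) (fun k => ?_) hdist
    · refine le_trans (abs_nonneg _)
        (Finset.le_sup' (fun x : S × A × B => |f^[k] Q₀ x - ContractingWith.fixedPoint f hC x|)
          (Finset.mem_univ (Classical.arbitrary (S × A × B))))
    · refine Finset.sup'_le _ _ fun x _ => ?_
      have := dist_le_pi_dist (f^[k] Q₀) (ContractingWith.fixedPoint f hC) x
      rwa [Real.dist_eq] at this
  · intro Q₀ s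
    have hdist : Filter.Tendsto (fun k => dist (f^[k] Q₀) (ContractingWith.fixedPoint f hC))
        Filter.atTop (nhds 0) :=
      tendsto_iff_dist_tendsto_zero.mp (hC.tendsto_iterate_fixedPoint Q₀)
    rw [tendsto_iff_dist_tendsto_zero]
    refine squeeze_zero (fun k => dist_nonneg) (fun k => ?_) hdist
    rw [Real.dist_eq]
    exact hVdist _ _ s
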